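/- Assume G has the 4-cycle chord property and the 5-cycle chord property, the 10-cycle O is chordless, and w is a vertex of G whose images under the ten elements of the dihedral group generated by s and t are pairwise distinct. If w is adjacent to 8 consecutive vertices of O, then w is adjacent to every vertex of O. -/

import Mathlib

theorem stmt17 {V : Type*} (G : SimpleGraph V)
    (hchord4 : ∀ w1 w2 w3 w4 : V, G.Adj w1 w2 → G.Adj w2 w3 → G.Adj w3 w4 →
      G.Adj w4 w1 → w1 ≠ w3 → w2 ≠ w4 → G.Adj w1 w3 ∨ G.Adj w2 w4)
    (hchord5 : ∀ w1 w2 w3 w4 w5 : V,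
      ([w1, w2, w3, w4, w5] : List V).Pairwise (· ≠ ·) →
      G.Adj w1 w2 → G.Adj w2 w3 → G.Adj w3 w4 → G.Adj w4 w5 → G.Adj w5 w1 →
      G.Adj w1 w3 ∨ G.Adj w2 w4 ∨ G.Adj w3 w5 ∨ G.Adj w4 w1 ∨ G.Adj w5 w2)
    (s t : G ≃g G)
    (hss : ∀ z, s (s z) = z) (htt : ∀ z, t (t z) = z)
    (hst5 : ∀ z : V, s (t (s (t (s (t (s (t (s (t (z)))))))))) = z)
    (v : V) (hvs : G.Adj v (s v)) (hvt : G.Adj v (t v))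
    (hdist : ([v, s v, s (t v), s (t (s v)), s (t (s (t v))), s (t (s (t (s v)))), s (t (s (t (s (t v))))), s (t (s (t (s (t (s v)))))), s (t (s (t (s (t (s (t v))))))), s (t (s (t (s (t (s (t (s v))))))))] : List V).Pairwise (· ≠ ·))
    (o : Fin 10 → V) (ho : o = ![v, s v, s (t v), s (t (s v)), s (t (s (t v))), s (t (s (t (s v)))), s (t (s (t (s (t v))))), s (t (s (t (s (t (s v)))))), s (t (s (t (s (t (s (t v))))))), s (t (s (t (s (t (s (t (s v))))))))])
    (hchordless : ∀ i j : Fin 10, i ≠ j → j ≠ i + 1 → i ≠ j + 1 → ¬ G.Adj (o i) (o j))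
    (w : V) (hworbit : ([w, s w, s (t w), s (t (s w)), s (t (s (t w))), s (t (s (t (s w)))), s (t (s (t (s (t w))))), s (t (s (t (s (t (s w)))))), s (t (s (t (s (t (s (t w))))))), s (t (s (t (s (t (s (t (s w))))))))] : List V).Pairwise (· ≠ ·))
    (hyp : ∃ i : Fin 10, ∀ m : ℕ, m < 8 → G.Adj w (o (i + Fin.ofNat 10 m))) :
    ∀ i : Fin 10, G.Adj w (o i) := by

  classical
  have hsm : ∀ {a b : V}, G.Adj a b → G.Adj (s a) (s b) := fun h => s.map_rel_iff.mpr h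
  have htm : ∀ {a b : V}, G.Adj a b → G.Adj (t a) (t b) := fun h => t.map_rel_iff.mpr h
  have ho0 : o 0 = v := by rw [ho]; rfl
  have ho1 : o 1 = s v := by rw [ho]; rfl
  have ho2 : o 2 = s (t v) := by rw [ho]; rfl
  have ho3 : o 3 = s (t (s v)) := by rw [ho]; rfl
  have ho4 : o 4 = s (t (s (t v))) := by rw [ho]; rfl
  have ho5 : o 5 = s (t (s (t (s v)))) := by rw [ho]; rfl
  have ho6 : o 6 = s (t (s (t (s (t v))))) := by rw [ho]; rfl
  have ho7 : o 7 = s (t (s (t (s (t (s v)))))) := by rw [ho]; rfl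
  have ho8 : o 8 = s (t (s (t (s (t (s (t v))))))) := by rw [ho]; rfl
  have ho9 : o 9 = s (t (s (t (s (t (s (t (s v)))))))) := by rw [ho]; rfl
  have e90 : G.Adj (o 9) (o 0) := by
    have h := hsm (htm (hsm (htm (hsm (htm (hsm (htm (hsm hvt))))))))
    rw [hst5] at h
    rw [ho9, ho0]; exact h
  have hedge : ∀ k : Fin 10, G.Adj (o k) (o (k + 1)) := by
    intro k
    fin_cases k
    · show G.Adj (o 0) (o 1); rw [ho0, ho1]; exact hvs
    · show G.Adj (o 1) (o 2); rw [ho1, ho2]; exact hsm hvt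
    · show G.Adj (o 2) (o 3); rw [ho2, ho3]; exact hsm (htm hvs)
    · show G.Adj (o 3) (o 4); rw [ho3, ho4]; exact hsm (htm (hsm hvt))
    · show G.Adj (o 4) (o 5); rw [ho4, ho5]; exact hsm (htm (hsm (htm hvs)))
    · show G.Adj (o 5) (o 6); rw [ho5, ho6]; exact hsm (htm (hsm (htm (hsm hvt))))
    · show G.Adj (o 6) (o 7); rw [ho6, ho7]; exact hsm (htm (hsm (htm (hsm (htm hvs)))))
    · show G.Adj (o 7) (o 8); rw [ho7, ho8]
      exact hsm (htm (hsm (htm (hsm (htm (hsm hvt))))))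
    · show G.Adj (o 8) (o 9); rw [ho8, ho9]
      exact hsm (htm (hsm (htm (hsm (htm (hsm (htm hvs)))))))
    · show G.Adj (o 9) (o 0); exact e90
  have hlist : (List.ofFn o).Pairwise (· ≠ ·) := by
    rw [ho]
    simpa [List.ofFn_succ] using hdist
  have h2 : ∀ a b : Fin 10, a < b → o a ≠ o b := List.pairwise_ofFn.mp hlist
  have hone : ∀ a b : Fin 10, a ≠ b → o a ≠ o b := by
    intro a b hab
    rcases lt_or_gt_of_ne hab with h | h
    · exact h2 a b h
    · exact (h2 b a h).symm
  obtain ⟨i, hadj⟩ := hyp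
  have htool : ∀ a b : Fin 10, a ≠ b → i + a ≠ i + b := fun a b hab h => hab (add_left_cancel h)
  set q : Fin 10 → V := fun c => o (i + c) with hq
  have qadj : ∀ c : Fin 10, c.val < 8 → G.Adj w (q c) := by
    intro c hc
    have := hadj c.val hc
    rwa [Fin.ofNat_val_eq_self] at this
  have qedge : ∀ c : Fin 10, G.Adj (q c) (q (c + 1)) := by
    intro c
    have := hedge (i + c)
    rwa [add_assoc] at this
  have qnadj : ∀ a b : Fin 10, a ≠ b → b ≠ a + 1 → a ≠ b + 1 → ¬ G.Adj (q a) (q b) := by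
    intro a b h1 h2 h3
    refine hchordless (i + a) (i + b) (htool _ _ h1) ?_ ?_
    · rw [add_assoc]; exact htool _ _ h2
    · rw [add_assoc]; exact htool _ _ h3
  have qne : ∀ a b : Fin 10, a ≠ b → q a ≠ q b := fun a b h => hone _ _ (htool a b h)
  have wne0 : w ≠ q 0 := fun h =>
    qnadj 0 3 (by decide) (by decide) (by decide) (h ▸ qadj 3 (by decide))
  have wne7 : w ≠ q 7 := fun h =>
    qnadj 7 2 (by decide) (by decide) (by decide) (h ▸ qadj 2 (by decide))
  have wne8 : w ≠ q 8 := fun h =>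
    qnadj 8 0 (by decide) (by decide) (by decide) (h ▸ qadj 0 (by decide))
  have wne9 : w ≠ q 9 := fun h =>
    qnadj 9 1 (by decide) (by decide) (by decide) (h ▸ qadj 1 (by decide))
  have h90 : G.Adj (q 9) (q 0) := by
    have := qedge 9
    rwa [show (9 : Fin 10) + 1 = 0 by decide] at this
  have hpw : ([w, q 7, q 8, q 9, q 0] : List V).Pairwise (· ≠ ·) := by
    apply List.Pairwise.cons
    · intro x hx
      simp only [List.mem_cons, List.not_mem_nil, or_false, List.mem_singleton] at hx
      rcases hx with rfl | rfl | rfl | rfl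
      exacts [wne7, wne8, wne9, wne0]
    apply List.Pairwise.cons
    · intro x hx
      simp only [List.mem_cons, List.not_mem_nil, or_false, List.mem_singleton] at hx
      rcases hx with rfl | rfl | rfl
      exacts [qne 7 8 (by decide), qne 7 9 (by decide), qne 7 0 (by decide)]
    apply List.Pairwise.cons
    · intro x hx
      simp only [List.mem_cons, List.not_mem_nil, or_false, List.mem_singleton] at hx
      rcases hx with rfl | rfl
      exacts [qne 8 9 (by decide), qne 8 0 (by decide)]
    apply List.Pairwise.cons
    · intro x hx
      simp only [List.mem_cons, List.not_mem_nil, or_false, List.mem_singleton] at hx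
      subst hx
      exact qne 9 0 (by decide)
    exact List.pairwise_singleton _ _
  have h5 := hchord5 w (q 7) (q 8) (q 9) (q 0) hpw (qadj 7 (by decide))
    (qedge 7) (qedge 8) h90 (qadj 0 (by decide)).symm
  have w89 : G.Adj w (q 8) ∧ G.Adj w (q 9) := by
    have n79 : ¬ G.Adj (q 7) (q 9) := qnadj 7 9 (by decide) (by decide) (by decide)
    have n80 : ¬ G.Adj (q 8) (q 0) := qnadj 8 0 (by decide) (by decide) (by decide)
    have n07 : ¬ G.Adj (q 0) (q 7) := qnadj 0 7 (by decide) (by decide) (by decide)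
    rcases h5 with h | h | h | h | h
    · -- h : G.Adj w (q 8)
      refine ⟨h, ?_⟩
      rcases hchord4 w (q 8) (q 9) (q 0) h (qedge 8) h90 (qadj 0 (by decide)).symm
        wne9 (qne 8 0 (by decide)) with h' | h'
      · exact h'
      · exact absurd h' n80
    · exact absurd h n79
    · exact absurd h n80
    · -- h : G.Adj (q 9) w
      have h := h.symm
      refine ⟨?_, h⟩
      rcases hchord4 w (q 7) (q 8) (q 9) (qadj 7 (by decide)) (qedge 7) (qedge 8) h.symm
        wne8 (qne 7 9 (by decide)) with h' | h'
      · exact h'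
      · exact absurd h' n79
    · exact absurd h n07
  intro j
  have hqj : q (j - i) = o j := by rw [hq]; simp
  rw [← hqj]
  set c := j - i with hc
  by_cases hc8 : c.val < 8
  · exact qadj c hc8
  · have : c.val = 8 ∨ c.val = 9 := by omega
    rcases this with h | h
    · have : c = 8 := Fin.ext h
      rw [this]; exact w89.1
    · have : c = 9 := Fin.ext h
      rw [this]; exact w89.2
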